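/- Let H be a symmetric positive semidefinite matrix of size (d·m)×(d·m), viewed as a d×d array of m×m blocks H_{s,s'}, and let w ∈ ℝ^{d×m} be a matrix with rows w_1,…,w_d ∈ ℝ^m. Then ∑_{s,s'=1}^d ⟨w_s, w_{s'}⟩ · Tr(H_{s,s'}) ≤ ‖w‖_F² · Tr(H), where ‖w‖_F² = ∑_{s=1}^d ‖w_s‖² is the squared Frobenius norm and Tr(H) = ∑_{s=1}^d Tr(H_{s,s}). -/

import Mathlib

section Aux
variable {n : Type*} [Fintype n] [DecidableEq n]
set_option linter.unusedSectionVars false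

lemma quadform_nonneg {A : Matrix n n ℝ} (hA : A.PosSemidef) (x : n → ℝ) :
    0 ≤ ∑ p, ∑ q, x p * A p q * x q := by
  have := hA.dotProduct_mulVec_nonneg x
  simpa [dotProduct, Matrix.mulVec, Finset.mul_sum, mul_assoc,
    mul_comm, mul_left_comm] using this

lemma sq_apply_le {A : Matrix n n ℝ} (hA : A.PosSemidef) (p q : n) :
    A p q ^ 2 ≤ A p p * A q q := by
  by_cases hpq : p = q
  · subst hpq
    have h0 : 0 ≤ A p p := by
      have := quadform_nonneg hA (fun r => if r = p then 1 else 0)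
      simpa [Finset.sum_ite_eq', ite_mul, mul_ite] using this
    nlinarith
  have hsym : A q p = A p q := by
    have := congrFun (congrFun hA.1 p) q
    simpa [Matrix.conjTranspose_apply] using this
  have hquad : ∀ t : ℝ, 0 ≤ A p p * (t * t) + (2 * A p q) * t + A q q := by
    intro t
    have := quadform_nonneg hA
      (fun r => (if r = p then t else 0) + (if r = q then 1 else 0))
    have e : (∑ p', ∑ q',
        ((if p' = p then t else 0) + (if p' = q then 1 else 0)) * A p' q' *
        ((if q' = p then t else 0) + (if q' = q then 1 else 0))) =
        A p p * (t * t) + (2 * A p q) * t + A q q := by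
      simp only [add_mul, mul_add, ite_mul, mul_ite, zero_mul, mul_zero, zero_add,
        Finset.sum_add_distrib, Finset.sum_ite_eq', Finset.mem_univ, if_true]
      rw [hsym]; ring
    rw [e] at this
    exact this
  have := discrim_le_zero hquad
  rw [discrim] at this
  nlinarith

lemma diag_nonneg' {A : Matrix n n ℝ} (hA : A.PosSemidef) (p : n) : 0 ≤ A p p := by
  have := quadform_nonneg hA (fun r => if r = p then 1 else 0)
  simpa [Finset.sum_ite_eq', ite_mul, mul_ite] using this

lemma quadform_le_trace {A : Matrix n n ℝ} (hA : A.PosSemidef) (x : n → ℝ) :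
    ∑ p, ∑ q, x p * A p q * x q ≤ (∑ p, x p ^ 2) * ∑ p, A p p := by
  have hd := diag_nonneg' hA
  have habs : ∀ p q : n, x p * A p q * x q ≤
      (|x p| * Real.sqrt (A p p)) * (|x q| * Real.sqrt (A q q)) := by
    intro p q
    have h1 : |A p q| ≤ Real.sqrt (A p p) * Real.sqrt (A q q) :=
      calc |A p q| = Real.sqrt (A p q ^ 2) := (Real.sqrt_sq_eq_abs _).symm
        _ ≤ Real.sqrt (A p p * A q q) := Real.sqrt_le_sqrt (sq_apply_le hA p q)
        _ = _ := Real.sqrt_mul (hd p) _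
    calc x p * A p q * x q ≤ |x p * A p q * x q| := le_abs_self _
      _ = |x p| * |A p q| * |x q| := by rw [abs_mul, abs_mul]
      _ ≤ |x p| * (Real.sqrt (A p p) * Real.sqrt (A q q)) * |x q| := by
          exact mul_le_mul_of_nonneg_right
            (mul_le_mul_of_nonneg_left h1 (abs_nonneg _)) (abs_nonneg _)
      _ = _ := by ring
  calc ∑ p, ∑ q, x p * A p q * x q
      ≤ ∑ p, ∑ q, (|x p| * Real.sqrt (A p p)) * (|x q| * Real.sqrt (A q q)) :=
        Finset.sum_le_sum fun p _ => Finset.sum_le_sum fun q _ => habs p q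
    _ = (∑ p, |x p| * Real.sqrt (A p p)) ^ 2 := by
        rw [sq, Finset.sum_mul_sum]
    _ ≤ (∑ p, |x p| ^ 2) * ∑ p, Real.sqrt (A p p) ^ 2 :=
        Finset.sum_mul_sq_le_sq_mul_sq _ _ _
    _ = (∑ p, x p ^ 2) * ∑ p, A p p := by
        simp [sq_abs, Real.sq_sqrt, hd]

end Aux

/-- Lemma 2 of the paper: for a symmetric positive semidefinite matrix `H` of size
`(d*m) × (d*m)` viewed as a `d × d` array of `m × m` blocks `H_{s,s'}`, and a weight matrix
`w ∈ ℝ^{d×m}` with rows `w_s`, the relative flatness measure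
`κ = ∑_{s,s'} ⟨w_s, w_{s'}⟩ ⋅ Tr(H_{s,s'})` is bounded by `‖w‖_F² ⋅ Tr(H)`. -/
theorem relative_flatness_le_norm_trace (d m : ℕ)
    (H : Matrix (Fin d × Fin m) (Fin d × Fin m) ℝ)
    (hH : H.PosSemidef) (w : Matrix (Fin d) (Fin m) ℝ) :
    (∑ s : Fin d, ∑ s' : Fin d,
        (∑ i : Fin m, w s i * w s' i) *
          Matrix.trace (Matrix.of fun i j : Fin m => H (s, i) (s', j))) ≤
      (∑ s : Fin d, ∑ i : Fin m, w s i ^ 2) * Matrix.trace H := by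
  have key : ∀ j i : Fin m,
      (∑ s : Fin d, ∑ s' : Fin d, w s j * H (s, i) (s', i) * w s' j) ≤
        (∑ s : Fin d, w s j ^ 2) * ∑ s : Fin d, H (s, i) (s, i) :=
    fun j i => quadform_le_trace (hH.submatrix fun s => (s, i)) (fun s => w s j)
  set f : Fin d → Fin d → Fin m → Fin m → ℝ :=
    fun s s' j i => w s j * H (s, i) (s', i) * w s' j with hf
  have e1 : (∑ s : Fin d, ∑ s' : Fin d,
        (∑ i : Fin m, w s i * w s' i) *
          Matrix.trace (Matrix.of fun i j : Fin m => H (s, i) (s', j))) =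
      ∑ j : Fin m, ∑ i : Fin m, ∑ s : Fin d, ∑ s' : Fin d, f s s' j i := by
    calc (∑ s : Fin d, ∑ s' : Fin d,
        (∑ i : Fin m, w s i * w s' i) *
          Matrix.trace (Matrix.of fun i j : Fin m => H (s, i) (s', j)))
        = ∑ s : Fin d, ∑ s' : Fin d, ∑ j : Fin m, ∑ i : Fin m, f s s' j i := by
          refine Finset.sum_congr rfl fun s _ => Finset.sum_congr rfl fun s' _ => ?_
          simp only [Matrix.trace, Matrix.diag, Matrix.of_apply, Finset.mul_sum,
            Finset.sum_mul, hf]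
          rw [Finset.sum_comm]
          exact Finset.sum_congr rfl fun j _ => Finset.sum_congr rfl fun i _ => by ring
      _ = ∑ s : Fin d, ∑ j : Fin m, ∑ s' : Fin d, ∑ i : Fin m, f s s' j i :=
          Finset.sum_congr rfl fun s _ => Finset.sum_comm
      _ = ∑ j : Fin m, ∑ s : Fin d, ∑ s' : Fin d, ∑ i : Fin m, f s s' j i :=
          Finset.sum_comm
      _ = ∑ j : Fin m, ∑ s : Fin d, ∑ i : Fin m, ∑ s' : Fin d, f s s' j i :=
          Finset.sum_congr rfl fun j _ => Finset.sum_congr rfl fun s _ => Finset.sum_comm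
      _ = ∑ j : Fin m, ∑ i : Fin m, ∑ s : Fin d, ∑ s' : Fin d, f s s' j i :=
          Finset.sum_congr rfl fun j _ => Finset.sum_comm
  rw [e1]
  calc ∑ j : Fin m, ∑ i : Fin m, ∑ s : Fin d, ∑ s' : Fin d, f s s' j i
      ≤ ∑ j : Fin m, ∑ i : Fin m,
          (∑ s : Fin d, w s j ^ 2) * ∑ s : Fin d, H (s, i) (s, i) :=
        Finset.sum_le_sum fun j _ => Finset.sum_le_sum fun i _ => key j i
    _ = (∑ s : Fin d, ∑ i : Fin m, w s i ^ 2) * Matrix.trace H := by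
        rw [← Finset.sum_mul_sum]
        rw [Matrix.trace]
        congr 1
        · exact Finset.sum_comm
        · rw [Fintype.sum_prod_type]
          exact Finset.sum_comm
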